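/- Let k ≥ 2 be an even integer, q a prime power with q ≡ k+1 (mod 2k), and m ≥ k. If the k-th power Paley digraph G_k(q) contains no transitive subtournament of order m, then R_{k/2}(m+2) ≥ k(q+1)+1; that is, there exists a (k/2)-edge-colored tournament on k(q+1) vertices containing no monochromatic transitive subtournament of order m+2. -/

import Mathlib

/-- `S_k = ⟨ω^k⟩`, the set of nonzero `k`-th power residues of `F`
(for `ω` a primitive element of the finite field `F`). -/
def Sk {F : Type} [Field F] (ω : F) (k : ℕ) : Set F :=
  {x | ∃ n : ℕ, x = ω ^ (k * n)}

namespace S19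

open scoped Classical in
noncomputable def indZ {F : Type} [Field F] (ω : F) (k : ℕ) (x : F) : ZMod k :=
  if h : ∃ n : ℕ, x = ω ^ n then ((h.choose : ℕ) : ZMod k) else 0

abbrev Vt (F : Type) (k : ℕ) := (F × ZMod k) ⊕ ZMod k

def piV {F : Type} (k : ℕ) : Vt F k → Option F
  | .inl (a, _) => some a
  | .inr _ => none

def icV {F : Type} (k : ℕ) : Vt F k → ZMod k
  | .inl (_, i) => i
  | .inr i => i

open scoped Classical in
noncomputable def DvalV {F : Type} [Field F] (ω : F) (k : ℕ) : Vt F k → Vt F k → ZMod k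
  | .inl (a, i), .inl (b, j) => if a = b then j - i else i + j + indZ ω k (a - b)
  | .inl (_, i), .inr j => i + j + ((k / 2 : ℕ) : ZMod k)
  | .inr i, .inl (_, j) => i + j
  | .inr i, .inr j => j - i

open scoped Classical in
noncomputable def RtV {F : Type} [Field F] (ω : F) (k : ℕ) (u v : Vt F k) (tie : Prop) : Prop :=
  if piV k u = piV k v then
    (0 < (DvalV ω k u v).val ∧ (DvalV ω k u v).val < k / 2) ∨
      ((DvalV ω k u v).val = k / 2 ∧ tie)
  else (DvalV ω k u v).val < k / 2

open scoped Classical in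
noncomputable def cV {F : Type} [Field F] (ω : F) (k : ℕ) (u v : Vt F k) : ℕ :=
  if piV k u = piV k v then 1 else (DvalV ω k u v).val + 1

section IndLemmas

variable {F : Type} [Field F] {ω : F} {k : ℕ}

theorem ind_spec (hω : ∀ x : F, x ≠ 0 → ∃ n : ℕ, x = ω ^ n) {x : F} (hx : x ≠ 0) :
    ∃ n : ℕ, x = ω ^ n ∧ (n : ZMod k) = indZ ω k x := by
  have h : ∃ n : ℕ, x = ω ^ n := hω x hx
  rw [indZ, dif_pos h]
  exact ⟨h.choose, h.choose_spec, rfl⟩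

theorem ind_pow (hcong : ∀ a b : ℕ, ω ^ a = ω ^ b → (a : ZMod k) = (b : ZMod k)) (n : ℕ) :
    indZ ω k (ω ^ n) = (n : ZMod k) := by
  have h : ∃ m : ℕ, ω ^ n = ω ^ m := ⟨n, rfl⟩
  rw [indZ, dif_pos h]
  exact hcong _ _ h.choose_spec.symm

theorem ind_mul (hω : ∀ x : F, x ≠ 0 → ∃ n : ℕ, x = ω ^ n)
    (hcong : ∀ a b : ℕ, ω ^ a = ω ^ b → (a : ZMod k) = (b : ZMod k))
    {x y : F} (hx : x ≠ 0) (hy : y ≠ 0) :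
    indZ ω k (x * y) = indZ ω k x + indZ ω k y := by
  obtain ⟨nx, hnx, hix⟩ := ind_spec (k := k) hω hx
  obtain ⟨ny, hny, hiy⟩ := ind_spec (k := k) hω hy
  obtain ⟨nz, hnz, hiz⟩ := ind_spec (k := k) hω (mul_ne_zero hx hy)
  have : ω ^ nz = ω ^ (nx + ny) := by rw [← hnz, hnx, hny, pow_add]
  have h2 := hcong _ _ this
  rw [← hiz, h2]
  push_cast
  rw [hix, hiy]

theorem ind_one (hcong : ∀ a b : ℕ, ω ^ a = ω ^ b → (a : ZMod k) = (b : ZMod k)) :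
    indZ ω k 1 = 0 := by
  have := ind_pow hcong 0
  simpa using this

theorem ind_inv (hω : ∀ x : F, x ≠ 0 → ∃ n : ℕ, x = ω ^ n)
    (hcong : ∀ a b : ℕ, ω ^ a = ω ^ b → (a : ZMod k) = (b : ZMod k))
    {x : F} (hx : x ≠ 0) :
    indZ ω k x⁻¹ = - indZ ω k x := by
  have h := ind_mul hω hcong (inv_ne_zero hx) hx
  rw [inv_mul_cancel₀ hx, ind_one hcong] at h
  linear_combination -h

theorem mem_Sk_iff [NeZero k] (hω : ∀ x : F, x ≠ 0 → ∃ n : ℕ, x = ω ^ n)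
    (hcong : ∀ a b : ℕ, ω ^ a = ω ^ b → (a : ZMod k) = (b : ZMod k))
    (hω0 : ω ≠ 0) (x : F) :
    x ∈ Sk ω k ↔ (x ≠ 0 ∧ indZ ω k x = 0) := by
  constructor
  · rintro ⟨n, rfl⟩
    refine ⟨pow_ne_zero _ hω0, ?_⟩
    rw [ind_pow hcong]
    simpa using (ZMod.natCast_eq_zero_iff (k * n) k).mpr ⟨n, rfl⟩
  · rintro ⟨hx, hz⟩
    obtain ⟨n, hn, hi⟩ := ind_spec (k := k) hω hx
    rw [← hi] at hz
    obtain ⟨c, hc⟩ := (ZMod.natCast_eq_zero_iff n k).mp hz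
    exact ⟨c, by rw [hn, hc]⟩

end IndLemmas

section DvalLemmas

variable {F : Type} [Field F] {ω : F} {k : ℕ}

theorem piV_inl {a : F} {i : ZMod k} : piV k (Sum.inl (a, i) : Vt F k) = some a := rfl
theorem piV_inr {i : ZMod k} : piV k (Sum.inr i : Vt F k) = none := rfl

/-- equal fibers + equal index forces equality -/
theorem par_ext {u v : Vt F k} (hp : piV k u = piV k v) (hi : icV k u = icV k v) : u = v := by
  rcases u with ⟨a, i⟩ | i <;> rcases v with ⟨b, j⟩ | j <;>
    simp_all [piV, icV]

theorem Dval_par {u v : Vt F k} (hp : piV k u = piV k v) :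
    DvalV ω k u v = icV k v - icV k u := by
  rcases u with ⟨a, i⟩ | i <;> rcases v with ⟨b, j⟩ | j <;>
    simp_all [piV, icV, DvalV]

theorem Dswap_par {u v : Vt F k} (hp : piV k u = piV k v) :
    DvalV ω k v u = - DvalV ω k u v := by
  rw [Dval_par hp, Dval_par hp.symm]
  ring

theorem Dswap_nonpar
    (hneg : ∀ x : F, x ≠ 0 → indZ ω k (-x) = indZ ω k x + ((k / 2 : ℕ) : ZMod k))
    (h2κ : ((k / 2 : ℕ) : ZMod k) + ((k / 2 : ℕ) : ZMod k) = 0)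
    {u v : Vt F k} (h : piV k u ≠ piV k v) :
    DvalV ω k v u = DvalV ω k u v + ((k / 2 : ℕ) : ZMod k) := by
  rcases u with ⟨a, i⟩ | i <;> rcases v with ⟨b, j⟩ | j
  · have hab : a ≠ b := by simpa [piV] using h
    have h1 : b - a = -(a - b) := by ring
    rw [DvalV, DvalV, if_neg hab, if_neg (Ne.symm hab), h1,
      hneg _ (sub_ne_zero_of_ne hab)]
    ring
  · show (j + i : ZMod k) = (i + j + ((k / 2 : ℕ) : ZMod k)) + ((k / 2 : ℕ) : ZMod k)
    linear_combination -h2κ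
  · show (j + i + ((k / 2 : ℕ) : ZMod k) : ZMod k) = (i + j) + ((k / 2 : ℕ) : ZMod k)
    ring
  · exact absurd rfl h

theorem Dshift_left {u u' w : Vt F k} (hp : piV k u = piV k u') (hw : piV k u ≠ piV k w) :
    DvalV ω k u w = DvalV ω k u' w + (icV k u - icV k u') := by
  rcases u with ⟨a, i⟩ | i <;> rcases u' with ⟨a2, i2⟩ | i2
  · have haa : a = a2 := by simpa [piV] using hp
    subst haa
    rcases w with ⟨b, l⟩ | l
    · have hab : a ≠ b := by simpa [piV] using hw
      simp only [DvalV, icV]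
      rw [if_neg hab, if_neg hab]
      ring
    · show (i + l + ((k / 2 : ℕ) : ZMod k) : ZMod k) =
        (i2 + l + ((k / 2 : ℕ) : ZMod k)) + ((i : ZMod k) - i2)
      ring
  · exact absurd hp (by simp [piV])
  · exact absurd hp (by simp [piV])
  · rcases w with ⟨b, l⟩ | l
    · show (i + l : ZMod k) = (i2 + l) + ((i : ZMod k) - i2)
      ring
    · exact absurd rfl hw

theorem Dshift_right {u u' w : Vt F k} (hp : piV k u = piV k u') (hw : piV k u ≠ piV k w) :
    DvalV ω k w u = DvalV ω k w u' + (icV k u - icV k u') := by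
  rcases u with ⟨a, i⟩ | i <;> rcases u' with ⟨a2, i2⟩ | i2
  · have haa : a = a2 := by simpa [piV] using hp
    subst haa
    rcases w with ⟨b, l⟩ | l
    · have hab : b ≠ a := fun h => hw (by simp [piV, h])
      simp only [DvalV, icV]
      rw [if_neg hab, if_neg hab]
      ring
    · show (l + i : ZMod k) = (l + i2) + ((i : ZMod k) - i2)
      ring
  · exact absurd hp (by simp [piV])
  · exact absurd hp (by simp [piV])
  · rcases w with ⟨b, l⟩ | l
    · show (l + i + ((k / 2 : ℕ) : ZMod k) : ZMod k) =
        (l + i2 + ((k / 2 : ℕ) : ZMod k)) + ((i : ZMod k) - i2)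
      ring
    · exact absurd rfl hw

end DvalLemmas

section RtLemmas

variable {F : Type} [Field F] {ω : F} {k : ℕ} [NeZero k]

theorem val_kappa (hk2 : 2 ≤ k) : ((( k / 2 : ℕ)) : ZMod k).val = k / 2 :=
  ZMod.val_cast_of_lt (by omega)

theorem L1 (hhalf : k / 2 + k / 2 = k) (hk2 : 2 ≤ k) (d : ZMod k) :
    ((d + ((k / 2 : ℕ) : ZMod k)).val < k / 2) ↔ ¬ (d.val < k / 2) := by
  have hd : d.val < k := ZMod.val_lt d
  rw [ZMod.val_add, val_kappa hk2]
  rcases lt_or_ge d.val (k / 2) with h | h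
  · rw [Nat.mod_eq_of_lt (by omega)]
    omega
  · rw [Nat.mod_eq_sub_mod (by omega), Nat.mod_eq_of_lt (by omega)]
    omega

theorem Rt_irrefl (hk2 : 2 ≤ k) (u : Vt F k) (tie : Prop) : ¬ RtV ω k u u tie := by
  intro h
  rw [RtV, if_pos rfl, Dval_par rfl, sub_self] at h
  have h0 : (0 : ZMod k).val = 0 := ZMod.val_zero
  rcases h with ⟨h1, _⟩ | ⟨h1, _⟩ <;> omega

theorem Rt_total
    (hneg : ∀ x : F, x ≠ 0 → indZ ω k (-x) = indZ ω k x + ((k / 2 : ℕ) : ZMod k))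
    (hhalf : k / 2 + k / 2 = k) (hk2 : 2 ≤ k)
    {u v : Vt F k} (huv : u ≠ v) {t1 t2 : Prop} (ht : t1 ↔ ¬ t2) :
    RtV ω k u v t1 ↔ ¬ RtV ω k v u t2 := by
  have h2κ : ((k / 2 : ℕ) : ZMod k) + ((k / 2 : ℕ) : ZMod k) = 0 := by
    have : (((k / 2 + k / 2 : ℕ)) : ZMod k) = ((k : ℕ) : ZMod k) := by rw [hhalf]
    push_cast at this
    rw [ZMod.natCast_self] at this
    exact this
  by_cases hp : piV k u = piV k v
  · have hd0 : DvalV ω k u v ≠ 0 := by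
      intro h0
      apply huv
      apply par_ext hp
      have := Dval_par (ω := ω) hp
      rw [h0] at this
      linear_combination this
    rw [RtV, RtV, if_pos hp, if_pos hp.symm, Dswap_par hp]
    have hvlt : (DvalV ω k u v).val < k := ZMod.val_lt _
    have hvne : (DvalV ω k u v).val ≠ 0 := fun h => hd0 ((ZMod.val_eq_zero _).mp h)
    have hnegval : (-(DvalV ω k u v)).val = k - (DvalV ω k u v).val := by
      rw [ZMod.neg_val, if_neg hd0]
    rw [hnegval]
    rcases lt_trichotomy (DvalV ω k u v).val (k / 2) with h | h | h
    · constructor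
      · intro _ hc
        rcases hc with ⟨h1, h2c⟩ | ⟨h1, _⟩ <;> omega
      · intro _
        exact Or.inl ⟨by omega, h⟩
    · constructor
      · rintro (⟨h1, h2c⟩ | ⟨_, htie⟩) hc
        · omega
        · rcases hc with ⟨h1, h2c⟩ | ⟨_, htie2⟩
          · omega
          · exact (ht.mp htie) htie2
      · intro hc
        refine Or.inr ⟨h, ht.mpr fun htie2 => hc (Or.inr ⟨by omega, htie2⟩)⟩
    · constructor
      · rintro (⟨h1, h2c⟩ | ⟨h1, _⟩) <;> omega
      · intro hc
        exact absurd (Or.inl ⟨by omega, by omega⟩) hc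
  · have hp' : piV k v ≠ piV k u := fun h => hp h.symm
    rw [RtV, RtV, if_neg hp, if_neg hp', Dswap_nonpar hneg h2κ hp]
    rw [L1 hhalf hk2]
    tauto

theorem Rt_color (hk2 : 2 ≤ k) {u v : Vt F k} {tie : Prop} (h : RtV ω k u v tie) :
    1 ≤ cV ω k u v ∧ cV ω k u v ≤ k / 2 := by
  by_cases hp : piV k u = piV k v
  · rw [cV, if_pos hp]
    omega
  · rw [RtV, if_neg hp] at h
    rw [cV, if_neg hp]
    omega

end RtLemmas


end S19

open S19 in
set_option maxHeartbeats 1000000 in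
theorem stmt_19 (k : ℕ) (hk2 : 2 ≤ k) (hke : Even k)
    (F : Type) [Field F] [Fintype F]
    (hq : Fintype.card F % (2 * k) = k + 1)
    (ω : F) (hω : ∀ x : F, x ≠ 0 → ∃ n : ℕ, x = ω ^ n)
    (m : ℕ) (hm : k ≤ m)
    (hG : ¬ ∃ T : Set F, T.ncard = m ∧
      (∀ a ∈ T, ∀ b ∈ T, a ≠ b → (b - a ∈ Sk ω k ∨ a - b ∈ Sk ω k)) ∧
      (∀ a ∈ T, ∀ b ∈ T, ∀ d ∈ T,
        b - a ∈ Sk ω k → d - b ∈ Sk ω k → d - a ∈ Sk ω k)) :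
    ∃ (r : Fin (k * (Fintype.card F + 1)) → Fin (k * (Fintype.card F + 1)) → Prop)
      (c : Fin (k * (Fintype.card F + 1)) → Fin (k * (Fintype.card F + 1)) → ℕ),
      (∀ v, ¬ r v v) ∧
      (∀ u v, u ≠ v → (r u v ↔ ¬ r v u)) ∧
      (∀ u v, r u v → 1 ≤ c u v ∧ c u v ≤ k / 2) ∧
      ¬ ∃ (s : Finset (Fin (k * (Fintype.card F + 1)))) (col : ℕ),
          s.card = m + 2 ∧
          (∀ a ∈ s, ∀ b ∈ s, r a b → c a b = col) ∧
          (∀ a ∈ s, ∀ b ∈ s, ∀ d ∈ s, r a b → r b d → r a d) := by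
  classical
  obtain ⟨rr, hrr⟩ := hke
  haveI : NeZero k := ⟨by omega⟩
  have hhalf : k / 2 + k / 2 = k := by omega
  set q := Fintype.card F with hqdef
  -- arithmetic on q
  have h0 := Nat.div_add_mod q (2 * k)
  rw [hq] at h0
  set A := q / (2 * k) with hAdef
  set B := k * A with hBdef
  have hBq : 2 * B + (k + 1) = q := by
    have : 2 * k * A = 2 * B := by rw [hBdef]; ring
    omega
  have hq3 : k + 1 ≤ q := by omega
  have hdvd : k ∣ q - 1 := ⟨2 * A + 1, by have : k * (2 * A + 1) = 2 * (k * A) + k := by ring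
                                          omega⟩
  -- ω ≠ 0
  have hω0 : ω ≠ 0 := by
    intro hzero
    obtain ⟨x, hx⟩ : ∃ x : F, x ∉ ({0, 1} : Finset F) := by
      by_contra hcon
      push_neg at hcon
      have h1 : (Finset.univ : Finset F).card ≤ ({0, 1} : Finset F).card :=
        Finset.card_le_card (fun a _ => hcon a)
      have h2 : ({0, 1} : Finset F).card ≤ 2 :=
        (Finset.card_insert_le _ _).trans (by simp)
      rw [Finset.card_univ] at h1
      omega
    simp only [Finset.mem_insert, Finset.mem_singleton, not_or] at hx
    obtain ⟨n, hn⟩ := hω x hx.1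
    rcases n with _ | n
    · rw [pow_zero] at hn; exact hx.2 hn
    · rw [hzero, zero_pow (Nat.succ_ne_zero n)] at hn; exact hx.1 hn
  -- order of ω
  have hord : orderOf ω = q - 1 := by
    set u : Fˣ := Units.mk0 ω hω0 with hudef
    have hgen : ∀ x : Fˣ, x ∈ Subgroup.zpowers u := by
      intro x
      obtain ⟨n, hn⟩ := hω x.val x.ne_zero
      refine ⟨(n : ℤ), ?_⟩
      show u ^ (n : ℤ) = x
      rw [zpow_natCast]
      ext
      rw [Units.val_pow_eq_pow_val, hudef]
      exact hn.symm
    have h1 : orderOf u = Nat.card Fˣ := orderOf_eq_card_of_forall_mem_zpowers hgen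
    rw [Nat.card_eq_fintype_card, Fintype.card_units] at h1
    rw [← orderOf_units (y := u)] at h1  -- may need adjusting
    exact h1
  have hcong : ∀ a b : ℕ, ω ^ a = ω ^ b → (a : ZMod k) = (b : ZMod k) := by
    intro a b hab
    set u : Fˣ := Units.mk0 ω hω0 with hudef
    have hu : u ^ a = u ^ b := by
      ext
      rw [Units.val_pow_eq_pow_val, Units.val_pow_eq_pow_val]
      exact hab
    have hmod : a ≡ b [MOD orderOf u] := pow_eq_pow_iff_modEq.mp hu
    have hou : orderOf u = q - 1 := by rw [← orderOf_units (y := u)]; exact hord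
    rw [hou] at hmod
    exact (ZMod.natCast_eq_natCast_iff _ _ _).mpr (hmod.of_dvd hdvd)
  -- -1
  have hneg1 : indZ ω k (-1 : F) = ((k / 2 : ℕ) : ZMod k) := by
    set s : ℕ := (k / 2) * (2 * A + 1) with hsdef
    have hs0 : 0 < s := Nat.mul_pos (by omega) (by omega)
    have hs2 : s + s = q - 1 := by
      have e1 : s + s = (k / 2 + k / 2) * (2 * A + 1) := by rw [hsdef]; ring
      rw [hhalf] at e1
      have e2 : k * (2 * A + 1) = 2 * (k * A) + k := by ring
      omega
    have hpow1 : ω ^ (q - 1) = 1 := by rw [← hord]; exact pow_orderOf_eq_one ω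
    have hx2 : ω ^ s * ω ^ s = 1 := by rw [← pow_add, hs2, hpow1]
    have hx1 : ω ^ s ≠ 1 := by
      intro h
      have hdv := orderOf_dvd_of_pow_eq_one h
      rw [hord] at hdv
      have := Nat.le_of_dvd hs0 hdv
      omega
    have hx3 : (-1 : F) = ω ^ s := ((mul_self_eq_one_iff.mp hx2).resolve_left hx1).symm
    rw [hx3, ind_pow hcong]
    have hsplit : s = k * A + k / 2 := by
      have e1 : s = (k / 2 + k / 2) * A + k / 2 := by rw [hsdef]; ring
      rw [hhalf] at e1
      exact e1
    rw [hsplit]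
    push_cast
    rw [ZMod.natCast_self]
    ring
  have hindneg : ∀ x : F, x ≠ 0 → indZ ω k (-x) = indZ ω k x + ((k / 2 : ℕ) : ZMod k) := by
    intro x hx
    have h1 : (-x : F) = (-1) * x := by ring
    rw [h1, ind_mul hω hcong (neg_ne_zero.mpr one_ne_zero) hx, hneg1]
    ring
  have h2κ : ((k / 2 : ℕ) : ZMod k) + ((k / 2 : ℕ) : ZMod k) = 0 := by
    have e1 : (((k / 2 + k / 2 : ℕ)) : ZMod k) = ((k : ℕ) : ZMod k) := by rw [hhalf]
    push_cast at e1
    rw [ZMod.natCast_self] at e1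
    exact e1
  have hκ0 : ((k / 2 : ℕ) : ZMod k) ≠ 0 := by
    intro h
    have := (ZMod.natCast_eq_zero_iff _ _).mp h
    have := Nat.le_of_dvd (by omega) this
    omega
  have hSk : ∀ x : F, x ∈ Sk ω k ↔ (x ≠ 0 ∧ indZ ω k x = 0) :=
    mem_Sk_iff hω hcong hω0
  have hSkopp : ∀ x : F, x ∈ Sk ω k → -x ∈ Sk ω k → False := by
    intro x h1 h2
    obtain ⟨hx0, hxi⟩ := (hSk x).mp h1
    obtain ⟨_, hxi2⟩ := (hSk (-x)).mp h2
    rw [hindneg x hx0, hxi] at hxi2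
    exact hκ0 (by linear_combination hxi2)
  have hSk0 : (0 : F) ∉ Sk ω k := fun h => ((hSk 0).mp h).1 rfl
  -- the vertex equivalence
  have hcardV : Fintype.card (Vt F k) = k * (q + 1) := by
    simp only [Fintype.card_sum, Fintype.card_prod, ZMod.card]
    ring
  set e : Vt F k ≃ Fin (k * (q + 1)) := Fintype.equivFinOfCardEq hcardV with hedef
  set ev : Fin (k * (q + 1)) → Vt F k := ⇑e.symm with hevdef
  have hevinj : Function.Injective ev := e.symm.injective
  refine ⟨fun x y => RtV ω k (ev x) (ev y) (x < y),
    fun x y => cV ω k (ev x) (ev y), ?_, ?_, ?_, ?_⟩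
  · intro v
    exact Rt_irrefl hk2 _ _
  · intro x y hxy
    exact Rt_total hindneg hhalf hk2 (hevinj.ne hxy)
      ⟨fun h h2 => absurd h2 (lt_asymm h), fun h => (lt_or_gt_of_ne hxy).resolve_right h⟩
  · intro x y h
    exact Rt_color hk2 h
  · rintro ⟨s, col, hcard, hmono, htrans⟩
    simp only [] at hmono htrans
    -- abbreviations
    have hTT : ∀ x y : Fin (k * (q + 1)), x ≠ y →
        (RtV ω k (ev x) (ev y) (x < y) ↔ ¬ RtV ω k (ev y) (ev x) (y < x)) := fun x y hxy =>
      Rt_total hindneg hhalf hk2 (hevinj.ne hxy)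
        ⟨fun h h2 => absurd h2 (lt_asymm h), fun h => (lt_or_gt_of_ne hxy).resolve_right h⟩
    have hirr : ∀ x : Fin (k * (q + 1)), ¬ RtV ω k (ev x) (ev x) (x < x) := fun x =>
      Rt_irrefl hk2 _ _
    set πf : Fin (k * (q + 1)) → Option F := fun x => piV k (ev x) with hπfdef
    by_cases hallpar : ∀ x ∈ s, ∀ y ∈ s, πf x = πf y
    · -- all in one fiber: at most k vertices
      have hinj : Set.InjOn (fun x => icV k (ev x)) ↑s := by
        intro x hx y hy hxy
        exact hevinj (par_ext (hallpar x hx y hy) hxy)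
      have h1 : (s.image (fun x => icV k (ev x))).card = s.card :=
        Finset.card_image_of_injOn hinj
      have h2 : (s.image (fun x => icV k (ev x))).card ≤ Fintype.card (ZMod k) :=
        Finset.card_le_univ _
      rw [ZMod.card] at h2
      omega
    · push_neg at hallpar
      obtain ⟨x0, hx0s, y0, hy0s, hπ0⟩ := hallpar
      have hne0 : x0 ≠ y0 := fun h => hπ0 (by rw [h])
      -- fix the color data
      obtain ⟨a0, b0, ha0, hb0, hπab, hrab⟩ : ∃ a0 b0, a0 ∈ s ∧ b0 ∈ s ∧
          piV k (ev a0) ≠ piV k (ev b0) ∧ RtV ω k (ev a0) (ev b0) (a0 < b0) := by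
        by_cases h : RtV ω k (ev x0) (ev y0) (x0 < y0)
        · exact ⟨x0, y0, hx0s, hy0s, hπ0, h⟩
        · have h2 := hTT x0 y0 hne0
          exact ⟨y0, x0, hy0s, hx0s, Ne.symm hπ0, by tauto⟩
      set c' : ℕ := (DvalV ω k (ev a0) (ev b0)).val with hc'def
      have hcol : col = c' + 1 := by
        have hc := hmono a0 ha0 b0 hb0 hrab
        rw [cV, if_neg hπab] at hc
        omega
      have hc'lt : c' < k / 2 := by
        have h := hrab
        rw [RtV, if_neg hπab] at h
        exact h
      have hH1 : ∀ x ∈ s, ∀ y ∈ s, πf x ≠ πf y → RtV ω k (ev x) (ev y) (x < y) →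
          DvalV ω k (ev x) (ev y) = ((c' : ℕ) : ZMod k) := by
        intro x hx y hy hπ hr
        have hc := hmono x hx y hy hr
        rw [cV, if_neg hπ] at hc
        have hval : (DvalV ω k (ev x) (ev y)).val = c' := by omega
        rw [← hval]
        exact (ZMod.natCast_zmod_val _).symm
      -- the key structural lemma about parallel pairs
      have hlemI : ∀ x ∈ s, ∀ y ∈ s, x ≠ y → πf x = πf y → ∀ w ∈ s, πf x ≠ πf w →
          (icV k (ev y) - icV k (ev x) = ((k / 2 : ℕ) : ZMod k) ∧
            ((RtV ω k (ev x) (ev w) (x < w) ∧ RtV ω k (ev w) (ev y) (w < y)) ∨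
             (RtV ω k (ev y) (ev w) (y < w) ∧ RtV ω k (ev w) (ev x) (w < x)))) := by
        intro x hx y hy hxy hπ w hw hπw
        have hπwy : πf y ≠ πf w := by rw [← hπ]; exact hπw
        have hxw : x ≠ w := fun h => hπw (by rw [h])
        have hyw : y ≠ w := fun h => hπwy (by rw [h])
        have hshift : DvalV ω k (ev x) (ev w) =
            DvalV ω k (ev y) (ev w) + (icV k (ev x) - icV k (ev y)) := Dshift_left hπ hπw
        by_cases h1 : RtV ω k (ev x) (ev w) (x < w) <;>
          by_cases h2 : RtV ω k (ev y) (ev w) (y < w)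
        · -- both forward: contradiction
          exfalso
          have e1 := hH1 x hx w hw hπw h1
          have e2 := hH1 y hy w hw hπwy h2
          have : icV k (ev x) = icV k (ev y) := by linear_combination e1 - e2 - hshift
          exact hxy (hevinj (par_ext hπ this))
        · -- x→w, w→y
          have hwy : RtV ω k (ev w) (ev y) (w < y) := by
            have := hTT y w hyw; tauto
          have e1 := hH1 x hx w hw hπw h1
          have e2 := hH1 w hw y hy (Ne.symm hπwy) hwy
          have e4 : DvalV ω k (ev w) (ev y) =
              DvalV ω k (ev y) (ev w) + ((k / 2 : ℕ) : ZMod k) := Dswap_nonpar hindneg h2κ hπwy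
          refine ⟨by linear_combination hshift - e1 - e4 + e2 - h2κ, Or.inl ⟨h1, hwy⟩⟩
        · -- y→w, w→x
          have hwx : RtV ω k (ev w) (ev x) (w < x) := by
            have := hTT x w hxw; tauto
          have e1 := hH1 w hw x hx (Ne.symm hπw) hwx
          have e2 := hH1 y hy w hw hπwy h2
          have e4 : DvalV ω k (ev w) (ev x) =
              DvalV ω k (ev x) (ev w) + ((k / 2 : ℕ) : ZMod k) := Dswap_nonpar hindneg h2κ hπw
          refine ⟨by linear_combination hshift + e4 - e1 + e2, Or.inr ⟨h2, hwx⟩⟩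
        · -- both backward: contradiction
          exfalso
          have hwx : RtV ω k (ev w) (ev x) (w < x) := by
            have := hTT x w hxw; tauto
          have hwy : RtV ω k (ev w) (ev y) (w < y) := by
            have := hTT y w hyw; tauto
          have e1 := hH1 w hw x hx (Ne.symm hπw) hwx
          have e2 := hH1 w hw y hy (Ne.symm hπwy) hwy
          have hshift2 : DvalV ω k (ev w) (ev x) =
              DvalV ω k (ev w) (ev y) + (icV k (ev x) - icV k (ev y)) := Dshift_right hπ hπw
          have : icV k (ev x) = icV k (ev y) := by linear_combination e1 - e2 - hshift2
          exact hxy (hevinj (par_ext hπ this))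
      -- a witness outside any given fiber
      have hwit : ∀ a : Option F, ∃ w ∈ s, πf w ≠ a := by
        intro a
        by_cases h : πf x0 = a
        · exact ⟨y0, hy0s, fun hy => hπ0 (by rw [h, hy])⟩
        · exact ⟨x0, hx0s, h⟩
      -- fibers have at most two elements
      have hfib2 : ∀ a ∈ s.image πf, (s.filter (fun x => πf x = a)).card ≤ 2 := by
        intro a ha
        by_contra hgt
        push_neg at hgt
        obtain ⟨x, y, z, hxm, hym, hzm, hxy, hxz, hyz⟩ := Finset.two_lt_card_iff.mp hgt
        rw [Finset.mem_filter] at hxm hym hzm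
        obtain ⟨w, hws, hwa⟩ := hwit a
        have hπxw : πf x ≠ πf w := by rw [hxm.2]; exact fun h => hwa h.symm
        have h1 := hlemI x hxm.1 y hym.1 hxy (by rw [hxm.2, hym.2]) w hws hπxw
        have h2 := hlemI x hxm.1 z hzm.1 hxz (by rw [hxm.2, hzm.2]) w hws hπxw
        have : icV k (ev y) = icV k (ev z) := by linear_combination h1.1 - h2.1
        exact hyz (hevinj (par_ext (hym.2.trans hzm.2.symm) this))
      -- at most one fiber of size two
      have honefib : ∀ a ∈ s.image πf, ∀ b ∈ s.image πf,
          2 ≤ (s.filter (fun x => πf x = a)).card → 2 ≤ (s.filter (fun x => πf x = b)).card →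
          a = b := by
        intro a ha b hb h2a h2b
        by_contra hab
        obtain ⟨x, x', hxm, hx'm, hxx'⟩ := Finset.one_lt_card_iff.mp (by omega : 1 < (s.filter (fun u => πf u = a)).card)
        obtain ⟨y, y', hym, hy'm, hyy'⟩ := Finset.one_lt_card_iff.mp (by omega : 1 < (s.filter (fun u => πf u = b)).card)
        rw [Finset.mem_filter] at hxm hx'm hym hy'm
        -- the inner claim: a configuration r x y, r y x' with x,x' in fiber a is impossible
        have inner : ∀ u u', u ∈ s → u' ∈ s → u ≠ u' → πf u = a → πf u' = a →
            RtV ω k (ev u) (ev y) (u < y) → RtV ω k (ev y) (ev u') (y < u') → False := by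
          intro u u' hu hu' huu' hπu hπu' huy hyu'
          have hπuy : πf u ≠ πf y := by rw [hπu, hym.2]; exact hab
          have hπu'y : πf u' ≠ πf y := by rw [hπu', hym.2]; exact hab
          have hπyu : πf y ≠ πf u := Ne.symm hπuy
          have hπyu' : πf y ≠ πf u' := Ne.symm hπu'y
          have huyne : u ≠ y := fun h => hπuy (by rw [h])
          have hu'yne : u' ≠ y := fun h => hπu'y (by rw [h])
          have hπyy' : πf y = πf y' := hym.2.trans hy'm.2.symm
          have hy'une : y' ≠ u := fun h => hπuy (by rw [← h, ← hπyy']; )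
          have hy'u'ne : y' ≠ u' := fun h => hπu'y (by rw [← h, ← hπyy'])
          -- B: lemI applied to (y, y') with witness u
          have hB := hlemI y hym.1 y' hy'm.1 hyy' hπyy' u hu (by rw [hym.2, hπu]; exact Ne.symm hab)
          have hnyu : ¬ RtV ω k (ev y) (ev u) (y < u) := by
            have := hTT u y huyne; tauto
          have hy'u : RtV ω k (ev y') (ev u) (y' < u) ∧ RtV ω k (ev u) (ev y) (u < y) := by
            rcases hB.2 with ⟨h1, _⟩ | h1
            · exact absurd h1 hnyu
            · exact h1
          -- C: lemI applied to (y, y') with witness u'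
          have hC := hlemI y hym.1 y' hy'm.1 hyy' hπyy' u' hu' (by rw [hym.2, hπu']; exact Ne.symm hab)
          have hnu'y : ¬ RtV ω k (ev u') (ev y) (u' < y) := by
            have := hTT y u' hu'yne.symm; tauto
          have hu'y' : RtV ω k (ev y) (ev u') (y < u') ∧ RtV ω k (ev u') (ev y') (u' < y') := by
            rcases hC.2 with ⟨h1, h2⟩ | ⟨h1, h2⟩
            · exact ⟨h1, h2⟩
            · exact absurd h2 hnu'y
          -- transitivity contradictions
          have hy'y : RtV ω k (ev y') (ev y) (y' < y) :=
            htrans y' hy'm.1 u hu y hym.1 hy'u.1 hy'u.2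
          have hyy'r : RtV ω k (ev y) (ev y') (y < y') :=
            htrans y hym.1 u' hu' y' hy'm.1 hu'y'.1 hu'y'.2
          have := hTT y y' hyy'
          tauto
        have hπxy : πf x ≠ πf y := by rw [hxm.2, hym.2]; exact hab
        have hA := hlemI x hxm.1 x' hx'm.1 hxx' (hxm.2.trans hx'm.2.symm) y hym.1 hπxy
        rcases hA.2 with ⟨h1, h2⟩ | ⟨h1, h2⟩
        · exact inner x x' hxm.1 hx'm.1 hxx' hxm.2 hx'm.2 h1 h2
        · exact inner x' x hx'm.1 hxm.1 (Ne.symm hxx') hx'm.2 hxm.2 h1 h2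
      -- counting: many fibers
      have hIcard : m + 1 ≤ (s.image πf).card := by
        have hsum : s.card = ∑ a ∈ s.image πf, (s.filter (fun x => πf x = a)).card :=
          Finset.card_eq_sum_card_fiberwise (fun x hx => Finset.mem_image_of_mem _ hx)
        have hbound : ∑ a ∈ s.image πf, (s.filter (fun x => πf x = a)).card ≤
            ∑ a ∈ s.image πf, (1 + if 2 ≤ (s.filter (fun x => πf x = a)).card then 1 else 0) := by
          refine Finset.sum_le_sum ?_
          intro a ha
          have := hfib2 a ha
          by_cases h : 2 ≤ (s.filter (fun x => πf x = a)).card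
          · rw [if_pos h]; omega
          · rw [if_neg h]; omega
        have hsplit : ∑ a ∈ s.image πf, (1 + if 2 ≤ (s.filter (fun x => πf x = a)).card then 1 else 0) =
            (s.image πf).card + ((s.image πf).filter
              (fun a => 2 ≤ (s.filter (fun x => πf x = a)).card)).card := by
          rw [Finset.sum_add_distrib, Finset.sum_const, smul_eq_mul, mul_one, Finset.sum_boole,
            Nat.cast_id]
        have hJ : ((s.image πf).filter
            (fun a => 2 ≤ (s.filter (fun x => πf x = a)).card)).card ≤ 1 := by
          rw [Finset.card_le_one]
          intro a ha b hb
          rw [Finset.mem_filter] at ha hb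
          exact honefib a ha.1 b hb.1 ha.2 hb.2
        omega
      -- one representative per fiber
      obtain ⟨g, hg⟩ : ∃ g : Option F → Fin (k * (q + 1)),
          ∀ a ∈ s.image πf, g a ∈ s ∧ πf (g a) = a := by
        refine ⟨fun a => if h : ∃ x, x ∈ s ∧ πf x = a then h.choose else x0, ?_⟩
        intro a ha
        obtain ⟨x, hx, hxa⟩ := Finset.mem_image.mp ha
        have h : ∃ x, x ∈ s ∧ πf x = a := ⟨x, hx, hxa⟩
        simp only [dif_pos h]
        exact h.choose_spec
      set S' : Finset (Fin (k * (q + 1))) := (s.image πf).image g with hS'def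
      have hS'sub : S' ⊆ s := by
        intro x hx
        obtain ⟨a, ha, rfl⟩ := Finset.mem_image.mp hx
        exact (hg a ha).1
      have hS'card : S'.card = (s.image πf).card := by
        refine Finset.card_image_of_injOn ?_
        intro a ha b hb hab
        rw [← (hg a ha).2, ← (hg b hb).2, hab]
      have hS'fib : ∀ x ∈ S', ∀ y ∈ S', x ≠ y → πf x ≠ πf y := by
        intro x hx y hy hxy
        obtain ⟨a, ha, rfl⟩ := Finset.mem_image.mp hx
        obtain ⟨b, hb, rfl⟩ := Finset.mem_image.mp hy
        rw [(hg a ha).2, (hg b hb).2]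
        intro hab
        exact hxy (by rw [hab])
      -- a dominating vertex of S'
      obtain ⟨u1, hu1S, hu1max⟩ := S'.exists_max_image
        (fun x => (S'.filter (fun y => RtV ω k (ev x) (ev y) (x < y))).card)
        (by rw [← Finset.card_pos]; omega)
      have hdom : ∀ x ∈ S', x ≠ u1 → RtV ω k (ev u1) (ev x) (u1 < x) := by
        intro x hxS hxu
        by_contra hnr
        have hru : RtV ω k (ev x) (ev u1) (x < u1) := by
          have := hTT u1 x (Ne.symm hxu); tauto
        have hss : S'.filter (fun y => RtV ω k (ev u1) (ev y) (u1 < y)) ⊂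
            S'.filter (fun y => RtV ω k (ev x) (ev y) (x < y)) := by
          constructor
          · intro z hz
            rw [Finset.mem_filter] at hz ⊢
            exact ⟨hz.1, htrans x (hS'sub hxS) u1 (hS'sub hu1S) z (hS'sub hz.1) hru hz.2⟩
          · intro hsup
            have hmem : u1 ∈ S'.filter (fun y => RtV ω k (ev x) (ev y) (x < y)) :=
              Finset.mem_filter.mpr ⟨hu1S, hru⟩
            have := Finset.mem_filter.mp (hsup hmem)
            exact hirr u1 this.2
        have := Finset.card_lt_card hss
        have := hu1max x hxS
        omega
      set W : Finset (Fin (k * (q + 1))) := S'.erase u1 with hWdef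
      have hWsub : W ⊆ S' := Finset.erase_subset _ _
      have hWcard : m ≤ W.card := by
        rw [hWdef, Finset.card_erase_of_mem hu1S]
        omega
      -- remaining goal: the projection to F
      suffices hfin : ∃ p : Fin (k * (q + 1)) → F,
          ∀ x ∈ W, ∀ y ∈ W, x ≠ y → RtV ω k (ev x) (ev y) (x < y) → (p x - p y) ∈ Sk ω k by
        obtain ⟨p, hp⟩ := hfin
        have htotW : ∀ x ∈ W, ∀ y ∈ W, x ≠ y → (p x - p y) ∈ Sk ω k ∨ (p y - p x) ∈ Sk ω k := by
          intro x hx y hy hxy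
          by_cases h : RtV ω k (ev x) (ev y) (x < y)
          · exact Or.inl (hp x hx y hy hxy h)
          · have hr : RtV ω k (ev y) (ev x) (y < x) := by have := hTT x y hxy; tauto
            exact Or.inr (hp y hy x hx (Ne.symm hxy) hr)
        have hpinj : Set.InjOn p ↑W := by
          intro x hx y hy hpxy
          by_contra hxy
          rcases htotW x hx y hy hxy with h | h <;> rw [hpxy] at h <;>
            simp only [sub_self] at h <;> exact hSk0 h
        have hTcard : m ≤ (W.image p).card := by
          rw [Finset.card_image_of_injOn hpinj]
          exact hWcard
        obtain ⟨T', hT'sub, hT'card⟩ := Finset.exists_subset_card_eq hTcard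
        apply hG
        refine ⟨(T' : Set F), by rw [Set.ncard_coe_finset, hT'card], ?_, ?_⟩
        · intro a ha b hb hab
          obtain ⟨x, hxW, rfl⟩ := Finset.mem_image.mp (hT'sub ha)
          obtain ⟨y, hyW, rfl⟩ := Finset.mem_image.mp (hT'sub hb)
          have hxy : x ≠ y := fun h => hab (by rw [h])
          rcases htotW x hxW y hyW hxy with h | h
          · exact Or.inr h
          · exact Or.inl h
        · intro a ha b hb d hd hba hdb
          obtain ⟨x, hxW, rfl⟩ := Finset.mem_image.mp (hT'sub ha)
          obtain ⟨y, hyW, rfl⟩ := Finset.mem_image.mp (hT'sub hb)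
          obtain ⟨z, hzW, rfl⟩ := Finset.mem_image.mp (hT'sub hd)
          have hyx : RtV ω k (ev y) (ev x) (y < x) := by
            have hxyne : x ≠ y := by
              intro h
              rw [h, sub_self] at hba
              exact hSk0 hba
            by_contra hn
            have hr : RtV ω k (ev x) (ev y) (x < y) := by have := hTT x y hxyne; tauto
            have := hp x hxW y hyW hxyne hr
            exact hSkopp _ hba (by rwa [neg_sub])
          have hzy : RtV ω k (ev z) (ev y) (z < y) := by
            have hyzne : y ≠ z := by
              intro h
              rw [h, sub_self] at hdb
              exact hSk0 hdb
            by_contra hn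
            have hr : RtV ω k (ev y) (ev z) (y < z) := by have := hTT y z hyzne; tauto
            have := hp y hyW z hzW hyzne hr
            exact hSkopp _ hdb (by rwa [neg_sub])
          have hzx : RtV ω k (ev z) (ev x) (z < x) :=
            htrans z (hS'sub (hWsub hzW)) y (hS'sub (hWsub hyW)) x (hS'sub (hWsub hxW)) hzy hyx
          have hzxne : z ≠ x := by
            intro h
            rw [h] at hzx
            exact hirr x hzx
          exact hp z hzW x hxW hzxne hzx
      -- construct the projection p
      have hu1s : u1 ∈ s := hS'sub hu1S
      have hWmem : ∀ x ∈ W, x ∈ S' ∧ x ≠ u1 := fun x hx =>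
        ⟨hWsub hx, Finset.ne_of_mem_erase hx⟩
      have hπW : ∀ x ∈ W, πf u1 ≠ πf x := fun x hx =>
        Ne.symm (hS'fib x (hWmem x hx).1 u1 hu1S (hWmem x hx).2)
      have hπWW : ∀ x ∈ W, ∀ y ∈ W, x ≠ y → πf x ≠ πf y := fun x hx y hy hxy =>
        hS'fib x (hWmem x hx).1 y (hWmem y hy).1 hxy
      have hKey0 : ∀ x ∈ W, DvalV ω k (ev u1) (ev x) = ((c' : ℕ) : ZMod k) := by
        intro x hx
        exact hH1 u1 hu1s x (hS'sub (hWmem x hx).1) (hπW x hx) (hdom x (hWmem x hx).1 (hWmem x hx).2)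
      have hzc : (ω ^ c' : F) ≠ 0 := pow_ne_zero _ hω0
      rcases hevu1 : ev u1 with ⟨a1, i1⟩ | i1
      · -- the dominating vertex is a finite point
        have hz0 : (ω ^ (2 * i1.val) : F) ≠ 0 := pow_ne_zero _ hω0
        have hival : ((i1.val : ℕ) : ZMod k) = i1 := ZMod.natCast_zmod_val i1
        have hindz : indZ ω k ((ω ^ (2 * i1.val))⁻¹ : F) = -(2 * i1) := by
          rw [ind_inv hω hcong hz0, ind_pow hcong]
          push_cast
          rw [hival]
        refine ⟨fun x => Sum.elim
          (fun bi : F × ZMod k => ω ^ c' * (ω ^ (2 * i1.val))⁻¹ * (a1 - bi.1)⁻¹)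
          (fun _ => (0 : F)) (ev x), ?_⟩
        intro x hx y hy hxy hrxy
        have hDx := hKey0 x hx
        have hDy := hKey0 y hy
        rw [hevu1] at hDx hDy
        have hDxy := hH1 x (hS'sub (hWmem x hx).1) y (hS'sub (hWmem y hy).1)
          (hπWW x hx y hy hxy) hrxy
        rcases hex : ev x with ⟨b, j⟩ | j <;> rcases hey : ev y with ⟨d, l⟩ | l
        · -- both finite
          have hab : a1 ≠ b := by
            have h' := hπW x hx
            rw [hπfdef] at h'
            simp only [hevu1, hex, piV, ne_eq, Option.some.injEq] at h'
            exact h'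
          have had : a1 ≠ d := by
            have h' := hπW y hy
            rw [hπfdef] at h'
            simp only [hevu1, hey, piV, ne_eq, Option.some.injEq] at h'
            exact h'
          have hbd : b ≠ d := by
            have h' := hπWW x hx y hy hxy
            rw [hπfdef] at h'
            simp only [hex, hey, piV, ne_eq, Option.some.injEq] at h'
            exact h'
          have hab0 : a1 - b ≠ 0 := sub_ne_zero_of_ne hab
          have had0 : a1 - d ≠ 0 := sub_ne_zero_of_ne had
          have hbd0 : b - d ≠ 0 := sub_ne_zero_of_ne hbd
          rw [hex] at hDx
          simp only [DvalV] at hDx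
          rw [if_neg hab] at hDx
          rw [hey] at hDy
          simp only [DvalV] at hDy
          rw [if_neg had] at hDy
          rw [hex, hey] at hDxy
          simp only [DvalV] at hDxy
          rw [if_neg hbd] at hDxy
          simp only [hex, hey, Sum.elim_inl]
          have hfac : ω ^ c' * (ω ^ (2 * i1.val))⁻¹ * (a1 - b)⁻¹ -
              ω ^ c' * (ω ^ (2 * i1.val))⁻¹ * (a1 - d)⁻¹ =
              ω ^ c' * ((ω ^ (2 * i1.val))⁻¹ *
                ((b - d) * ((a1 - b)⁻¹ * (a1 - d)⁻¹))) := by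
            field_simp
            ring
          rw [hfac, hSk]
          refine ⟨mul_ne_zero hzc (mul_ne_zero (inv_ne_zero hz0) (mul_ne_zero hbd0
            (mul_ne_zero (inv_ne_zero hab0) (inv_ne_zero had0)))), ?_⟩
          rw [ind_mul hω hcong hzc (mul_ne_zero (inv_ne_zero hz0) (mul_ne_zero hbd0
              (mul_ne_zero (inv_ne_zero hab0) (inv_ne_zero had0)))),
            ind_mul hω hcong (inv_ne_zero hz0) (mul_ne_zero hbd0
              (mul_ne_zero (inv_ne_zero hab0) (inv_ne_zero had0))),
            ind_mul hω hcong hbd0 (mul_ne_zero (inv_ne_zero hab0) (inv_ne_zero had0)),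
            ind_mul hω hcong (inv_ne_zero hab0) (inv_ne_zero had0),
            ind_pow hcong, hindz, ind_inv hω hcong hab0, ind_inv hω hcong had0]
          linear_combination hDxy - hDx - hDy
        · -- x finite, y infinite
          have hab : a1 ≠ b := by
            have h' := hπW x hx
            rw [hπfdef] at h'
            simp only [hevu1, hex, piV, ne_eq, Option.some.injEq] at h'
            exact h'
          have hab0 : a1 - b ≠ 0 := sub_ne_zero_of_ne hab
          rw [hex] at hDx
          simp only [DvalV] at hDx
          rw [if_neg hab] at hDx
          rw [hey] at hDy
          simp only [DvalV] at hDy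
          rw [hex, hey] at hDxy
          simp only [DvalV] at hDxy
          simp only [hex, hey, Sum.elim_inl, Sum.elim_inr, sub_zero]
          rw [hSk]
          refine ⟨mul_ne_zero (mul_ne_zero hzc (inv_ne_zero hz0)) (inv_ne_zero hab0), ?_⟩
          rw [ind_mul hω hcong (mul_ne_zero hzc (inv_ne_zero hz0)) (inv_ne_zero hab0),
            ind_mul hω hcong hzc (inv_ne_zero hz0),
            ind_pow hcong, hindz, ind_inv hω hcong hab0]
          linear_combination hDxy - hDy - hDx
        · -- x infinite, y finite
          have had : a1 ≠ d := by
            have h' := hπW y hy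
            rw [hπfdef] at h'
            simp only [hevu1, hey, piV, ne_eq, Option.some.injEq] at h'
            exact h'
          have had0 : a1 - d ≠ 0 := sub_ne_zero_of_ne had
          rw [hex] at hDx
          simp only [DvalV] at hDx
          rw [hey] at hDy
          simp only [DvalV] at hDy
          rw [if_neg had] at hDy
          rw [hex, hey] at hDxy
          simp only [DvalV] at hDxy
          simp only [hex, hey, Sum.elim_inl, Sum.elim_inr, zero_sub]
          rw [hSk]
          have hpy0 : ω ^ c' * (ω ^ (2 * i1.val))⁻¹ * (a1 - d)⁻¹ ≠ 0 :=
            mul_ne_zero (mul_ne_zero hzc (inv_ne_zero hz0)) (inv_ne_zero had0)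
          refine ⟨neg_ne_zero.mpr hpy0, ?_⟩
          rw [hindneg _ hpy0,
            ind_mul hω hcong (mul_ne_zero hzc (inv_ne_zero hz0)) (inv_ne_zero had0),
            ind_mul hω hcong hzc (inv_ne_zero hz0),
            ind_pow hcong, hindz, ind_inv hω hcong had0]
          linear_combination hDxy - hDx - hDy + h2κ
        · -- both infinite: impossible
          exfalso
          apply hπWW x hx y hy hxy
          rw [hπfdef]
          simp only [hex, hey, piV]
      · -- the dominating vertex is the infinite point
        have hz0 : (ω ^ (2 * i1.val) : F) ≠ 0 := pow_ne_zero _ hω0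
        have hival : ((i1.val : ℕ) : ZMod k) = i1 := ZMod.natCast_zmod_val i1
        have hindz : indZ ω k ((ω ^ (2 * i1.val))⁻¹ : F) = -(2 * i1) := by
          rw [ind_inv hω hcong hz0, ind_pow hcong]
          push_cast
          rw [hival]
        refine ⟨fun x => Sum.elim
          (fun bi : F × ZMod k => ω ^ c' * (ω ^ (2 * i1.val))⁻¹ * bi.1)
          (fun _ => (0 : F)) (ev x), ?_⟩
        intro x hx y hy hxy hrxy
        have hDx := hKey0 x hx
        have hDy := hKey0 y hy
        rw [hevu1] at hDx hDy
        have hDxy := hH1 x (hS'sub (hWmem x hx).1) y (hS'sub (hWmem y hy).1)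
          (hπWW x hx y hy hxy) hrxy
        rcases hex : ev x with ⟨b, j⟩ | j
        · rcases hey : ev y with ⟨d, l⟩ | l
          · -- both finite
            have hbd : b ≠ d := by
              have h' := hπWW x hx y hy hxy
              rw [hπfdef] at h'
              simp only [hex, hey, piV, ne_eq, Option.some.injEq] at h'
              exact h'
            have hbd0 : b - d ≠ 0 := sub_ne_zero_of_ne hbd
            rw [hex] at hDx
            simp only [DvalV] at hDx
            rw [hey] at hDy
            simp only [DvalV] at hDy
            rw [hex, hey] at hDxy
            simp only [DvalV] at hDxy
            rw [if_neg hbd] at hDxy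
            simp only [hex, hey, Sum.elim_inl]
            have hfac : ω ^ c' * (ω ^ (2 * i1.val))⁻¹ * b - ω ^ c' * (ω ^ (2 * i1.val))⁻¹ * d =
                ω ^ c' * ((ω ^ (2 * i1.val))⁻¹ * (b - d)) := by ring
            rw [hfac, hSk]
            refine ⟨mul_ne_zero hzc (mul_ne_zero (inv_ne_zero hz0) hbd0), ?_⟩
            rw [ind_mul hω hcong hzc (mul_ne_zero (inv_ne_zero hz0) hbd0),
              ind_mul hω hcong (inv_ne_zero hz0) hbd0,
              ind_pow hcong, hindz]
            linear_combination hDxy - hDx - hDy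
          · -- y infinite: impossible since the infinite fiber is taken by u1
            exfalso
            apply hπW y hy
            rw [hπfdef]
            simp only [hevu1, hey, piV]
        · -- x infinite: impossible
          exfalso
          apply hπW x hx
          rw [hπfdef]
          simp only [hevu1, hex, piV]
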